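/- Let P be a finite partially ordered set and μ₁, μ₂ probability distributions on P such that μ₁ is stochastically dominated by μ₂ (i.e., μ₁(U) ≤ μ₂(U) for every upset U ⊆ P). Then there exists a probability distribution λ on P × P whose first marginal is μ₁ and second marginal is μ₂, and such that λ(x,y) > 0 implies x ≤ y. -/
import Mathlib

open Finset

section StrassenAux

variable {P : Type*} [Fintype P] [PartialOrder P]

/-- `U` is an upset of `P`. -/
def StrassenIsUpset (U : Finset P) : Prop := ∀ x y, x ∈ U → x ≤ y → y ∈ U

open Classical in
/-- A natural-number potential that decreases during the mass-moving process. -/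
noncomputable def strassenPot (μ₁ μ₂ : P → ℝ) : ℕ :=
  (univ.filter (fun x => μ₁ x ≠ 0)).card + (univ.filter (fun x => μ₂ x ≠ 0)).card +
  ((univ : Finset (Finset P)).filter
      (fun U => StrassenIsUpset U ∧ ∑ x ∈ U, μ₁ x ≠ ∑ x ∈ U, μ₂ x)).card

open Classical in
theorem strassen_aux :
    ∀ n (μ₁ μ₂ : P → ℝ), strassenPot μ₁ μ₂ ≤ n → (∀ x, 0 ≤ μ₁ x) → (∀ x, 0 ≤ μ₂ x) →
    (∑ x, μ₁ x = ∑ x, μ₂ x) →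
    (∀ U : Finset P, StrassenIsUpset U → ∑ x ∈ U, μ₁ x ≤ ∑ x ∈ U, μ₂ x) →
    ∃ lam : P × P → ℝ, (∀ p, 0 ≤ lam p) ∧ (∀ x, ∑ y, lam (x, y) = μ₁ x) ∧
      (∀ y, ∑ x, lam (x, y) = μ₂ y) ∧ (∀ x y, 0 < lam (x, y) → x ≤ y) := by
  intro n
  induction n using Nat.strong_induction_on with
  | _ n ih =>
  intro μ₁ μ₂ hpot h₁ h₂ hsum hdom
  by_cases hex : ∃ x₀, 0 < μ₁ x₀
  · obtain ⟨x₀, hx₀⟩ := hex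
    -- the family of tight upsets avoiding x₀
    set 𝒯 : Finset (Finset P) := (univ : Finset (Finset P)).filter
      (fun U => StrassenIsUpset U ∧ x₀ ∉ U ∧ ∑ x ∈ U, μ₁ x = ∑ x ∈ U, μ₂ x) with h𝒯
    set T : Finset P := 𝒯.sup id with hT
    have hTup : StrassenIsUpset T := by
      intro a b ha hab
      rw [hT, Finset.mem_sup] at ha ⊢
      obtain ⟨U, hU, haU⟩ := ha
      exact ⟨U, hU, ((Finset.mem_filter.1 hU).2).1 a b haU hab⟩
    have hx₀T : x₀ ∉ T := by
      rw [hT, Finset.mem_sup]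
      rintro ⟨U, hU, hxU⟩
      exact ((Finset.mem_filter.1 hU).2).2.1 hxU
    have hTtight : ∑ x ∈ T, μ₁ x = ∑ x ∈ T, μ₂ x := by
      -- union of tight upsets avoiding x₀ is tight
      have key : ∀ 𝒮 : Finset (Finset P), (∀ U ∈ 𝒮, U ∈ 𝒯) →
          StrassenIsUpset (𝒮.sup id) ∧ ∑ x ∈ 𝒮.sup id, μ₂ x ≤ ∑ x ∈ 𝒮.sup id, μ₁ x := by
        intro 𝒮
        induction 𝒮 using Finset.induction_on with
        | empty => simp [StrassenIsUpset]
        | @insert U 𝒮' hU ihS =>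
          intro hsub
          have hUm := hsub U (Finset.mem_insert_self _ _)
          obtain ⟨-, hUup, -, hUt⟩ := Finset.mem_filter.1 hUm
          have h𝒮' := ihS (fun V hV => hsub V (Finset.mem_insert_of_mem hV))
          have hsupeq : (insert U 𝒮').sup id = U ∪ 𝒮'.sup id := by
            rw [Finset.sup_insert]; rfl
          constructor
          · intro a b ha hab
            rw [hsupeq, Finset.mem_union] at ha ⊢
            rcases ha with ha | ha
            · exact Or.inl (hUup a b ha hab)
            · exact Or.inr (h𝒮'.1 a b ha hab)
          · have hint : StrassenIsUpset (U ∩ 𝒮'.sup id) := by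
              intro a b ha hab
              rw [Finset.mem_inter] at ha ⊢
              exact ⟨hUup a b ha.1 hab, h𝒮'.1 a b ha.2 hab⟩
            have hd := hdom _ hint
            have e1 := Finset.sum_union_inter (s₁ := U) (s₂ := 𝒮'.sup id) (f := μ₁)
            have e2 := Finset.sum_union_inter (s₁ := U) (s₂ := 𝒮'.sup id) (f := μ₂)
            rw [hsupeq]
            have := h𝒮'.2
            linarith
      exact le_antisymm (hdom T hTup) (key 𝒯 (fun U hU => hU)).2
    -- tight upsets avoiding x₀ are contained in T
    have hsubT : ∀ U : Finset P, StrassenIsUpset U → x₀ ∉ U →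
        (∑ x ∈ U, μ₁ x = ∑ x ∈ U, μ₂ x) → U ⊆ T := by
      intro U hUup hUx hUt
      have : U ∈ 𝒯 := Finset.mem_filter.2 ⟨Finset.mem_univ _, hUup, hUx, hUt⟩
      exact Finset.le_sup (f := id) this
    -- the upset U* = T ∪ {z : x₀ ≤ z}
    set Ustar : Finset P := T ∪ univ.filter (fun z => x₀ ≤ z) with hUstar
    have hUstarUp : StrassenIsUpset Ustar := by
      intro a b ha hab
      rw [hUstar, Finset.mem_union] at ha ⊢
      rcases ha with ha | ha
      · exact Or.inl (hTup a b ha hab)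
      · exact Or.inr (Finset.mem_filter.2 ⟨Finset.mem_univ _,
          le_trans (Finset.mem_filter.1 ha).2 hab⟩)
    have hTsub : T ⊆ Ustar := Finset.subset_union_left
    -- find y ≥ x₀ with μ₂ y > 0, y ∉ T
    have hy : ∃ y ∈ Ustar \ T, 0 < μ₂ y := by
      by_contra hcon
      push_neg at hcon
      have hle0 : ∑ x ∈ Ustar \ T, μ₂ x ≤ 0 :=
        Finset.sum_nonpos (fun x hx => (hcon x hx))
      have hsd : ∑ x ∈ Ustar \ T, μ₂ x + ∑ x ∈ T, μ₂ x = ∑ x ∈ Ustar, μ₂ x :=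
        Finset.sum_sdiff hTsub
      have hins : insert x₀ T ⊆ Ustar := by
        intro z hz
        rcases Finset.mem_insert.1 hz with rfl | hz
        · exact Finset.mem_union_right _ (Finset.mem_filter.2 ⟨Finset.mem_univ _, le_refl _⟩)
        · exact hTsub hz
      have h1 : μ₁ x₀ + ∑ x ∈ T, μ₁ x ≤ ∑ x ∈ Ustar, μ₁ x := by
        have := Finset.sum_le_sum_of_subset_of_nonneg hins (fun i _ _ => h₁ i)
        rwa [Finset.sum_insert hx₀T] at this
      have h2 : ∑ x ∈ Ustar, μ₁ x ≤ ∑ x ∈ Ustar, μ₂ x := hdom _ hUstarUp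
      linarith
    obtain ⟨y, hyMem, hμ₂y⟩ := hy
    have hyT : y ∉ T := (Finset.mem_sdiff.1 hyMem).2
    have hx₀y : x₀ ≤ y := by
      have := (Finset.mem_sdiff.1 hyMem).1
      rcases Finset.mem_union.1 this with h | h
      · exact absurd h hyT
      · exact (Finset.mem_filter.1 h).2
    -- any upset containing y but not x₀ is not tight
    have hgap : ∀ U : Finset P, StrassenIsUpset U → y ∈ U → x₀ ∉ U →
        ∑ x ∈ U, μ₁ x < ∑ x ∈ U, μ₂ x := by
      intro U hUup hyU hxU
      rcases lt_or_eq_of_le (hdom U hUup) with h | h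
      · exact h
      · exact absurd (hsubT U hUup hxU h hyU) hyT
    -- the set of upsets containing y but not x₀
    set S : Finset (Finset P) := (univ : Finset (Finset P)).filter
      (fun U => StrassenIsUpset U ∧ y ∈ U ∧ x₀ ∉ U) with hS
    set gap : Finset P → ℝ := fun U => ∑ x ∈ U, μ₂ x - ∑ x ∈ U, μ₁ x with hgapdef
    set δ : ℝ := if h : S.Nonempty then S.inf' h gap else μ₁ x₀ with hδ
    have hδpos : 0 < δ := by
      rw [hδ]
      split
      · next h =>
        obtain ⟨U, hU, hEq⟩ := Finset.exists_mem_eq_inf' h gap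
        rw [hEq]
        obtain ⟨-, hUup, hyU, hxU⟩ := Finset.mem_filter.1 hU
        have := hgap U hUup hyU hxU
        simp only [hgapdef]; linarith
      · exact hx₀
    set ε : ℝ := min (min (μ₁ x₀) (μ₂ y)) δ with hε
    have hεpos : 0 < ε := lt_min (lt_min hx₀ hμ₂y) hδpos
    have hεle₁ : ε ≤ μ₁ x₀ := le_trans (min_le_left _ _) (min_le_left _ _)
    have hεle₂ : ε ≤ μ₂ y := le_trans (min_le_left _ _) (min_le_right _ _)
    have hεleGap : ∀ U ∈ S, ε ≤ gap U := by
      intro U hU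
      have hne : S.Nonempty := ⟨U, hU⟩
      have : δ = S.inf' hne gap := by rw [hδ, dif_pos hne]
      calc ε ≤ δ := min_le_right _ _
        _ = S.inf' hne gap := this
        _ ≤ gap U := Finset.inf'_le gap hU
    -- new measures
    set μ₁' : P → ℝ := fun x => μ₁ x - (if x = x₀ then ε else 0) with hμ₁'
    set μ₂' : P → ℝ := fun x => μ₂ x - (if x = y then ε else 0) with hμ₂'
    have h₁' : ∀ x, 0 ≤ μ₁' x := by
      intro x; rw [hμ₁']; dsimp only; split
      · next h => subst h; linarith
      · simpa using h₁ x
    have h₂' : ∀ x, 0 ≤ μ₂' x := by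
      intro x; rw [hμ₂']; dsimp only; split
      · next h => subst h; linarith
      · simpa using h₂ x
    have sum₁' : ∀ U : Finset P, ∑ x ∈ U, μ₁' x
        = ∑ x ∈ U, μ₁ x - (if x₀ ∈ U then ε else 0) := by
      intro U
      rw [hμ₁']
      rw [Finset.sum_sub_distrib, Finset.sum_ite_eq' U x₀ (fun _ => ε)]
    have sum₂' : ∀ U : Finset P, ∑ x ∈ U, μ₂' x
        = ∑ x ∈ U, μ₂ x - (if y ∈ U then ε else 0) := by
      intro U
      rw [hμ₂']
      rw [Finset.sum_sub_distrib, Finset.sum_ite_eq' U y (fun _ => ε)]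
    have hsum' : ∑ x, μ₁' x = ∑ x, μ₂' x := by
      rw [sum₁' univ, sum₂' univ]
      simp [hsum]
    have hdom' : ∀ U : Finset P, StrassenIsUpset U →
        ∑ x ∈ U, μ₁' x ≤ ∑ x ∈ U, μ₂' x := by
      intro U hUup
      rw [sum₁', sum₂']
      by_cases hx : x₀ ∈ U
      · have hyU : y ∈ U := hUup x₀ y hx hx₀y
        rw [if_pos hx, if_pos hyU]
        have := hdom U hUup; linarith
      · rw [if_neg hx]
        by_cases hyU : y ∈ U
        · rw [if_pos hyU]
          have hUS : U ∈ S := Finset.mem_filter.2 ⟨Finset.mem_univ _, hUup, hyU, hx⟩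
          have := hεleGap U hUS
          simp only [hgapdef] at this; linarith
        · rw [if_neg hyU]
          have := hdom U hUup; linarith
    -- potential decreases
    have hcase : ε = μ₁ x₀ ∨ ε = μ₂ y ∨ (S.Nonempty ∧ ε = δ) := by
      rcases min_cases (min (μ₁ x₀) (μ₂ y)) δ with ⟨h, -⟩ | ⟨h, hlt⟩
      · rcases min_cases (μ₁ x₀) (μ₂ y) with ⟨h', -⟩ | ⟨h', -⟩
        · left; rw [hε, h]; exact h'
        · right; left; rw [hε, h]; exact h'
      · by_cases hSne : S.Nonempty
        · exact Or.inr (Or.inr ⟨hSne, by rw [hε, h]⟩)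
        · exfalso
          rw [hδ, dif_neg hSne] at hlt
          exact absurd (min_le_left (μ₁ x₀) (μ₂ y)) (not_le.2 hlt)
    have hpot' : strassenPot μ₁' μ₂' < strassenPot μ₁ μ₂ := by
      have hsub1 : (univ.filter (fun x => μ₁' x ≠ 0)) ⊆ (univ.filter (fun x => μ₁ x ≠ 0)) := by
        intro x hx
        rw [Finset.mem_filter] at hx ⊢
        refine ⟨Finset.mem_univ _, fun h0 => hx.2 ?_⟩
        have hxne : x ≠ x₀ := by rintro rfl; exact absurd h0 (ne_of_gt hx₀)
        rw [hμ₁']; simp [hxne, h0]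
      have hsub2 : (univ.filter (fun x => μ₂' x ≠ 0)) ⊆ (univ.filter (fun x => μ₂ x ≠ 0)) := by
        intro x hx
        rw [Finset.mem_filter] at hx ⊢
        refine ⟨Finset.mem_univ _, fun h0 => hx.2 ?_⟩
        have hxne : x ≠ y := by rintro rfl; exact absurd h0 (ne_of_gt hμ₂y)
        rw [hμ₂']; simp [hxne, h0]
      have htight : ∀ U : Finset P, StrassenIsUpset U → (∑ x ∈ U, μ₁ x = ∑ x ∈ U, μ₂ x) →
          ∑ x ∈ U, μ₁' x = ∑ x ∈ U, μ₂' x := by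
        intro U hUup hUt
        rw [sum₁', sum₂']
        by_cases hx : x₀ ∈ U
        · rw [if_pos hx, if_pos (hUup x₀ y hx hx₀y), hUt]
        · rw [if_neg hx]
          by_cases hyU : y ∈ U
          · exact absurd hUt (ne_of_lt (hgap U hUup hyU hx))
          · rw [if_neg hyU, hUt]
      have hsub3 : ((univ : Finset (Finset P)).filter
            (fun U => StrassenIsUpset U ∧ ∑ x ∈ U, μ₁' x ≠ ∑ x ∈ U, μ₂' x)) ⊆
          ((univ : Finset (Finset P)).filter
            (fun U => StrassenIsUpset U ∧ ∑ x ∈ U, μ₁ x ≠ ∑ x ∈ U, μ₂ x)) := by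
        intro U hU
        rw [Finset.mem_filter] at hU ⊢
        exact ⟨Finset.mem_univ _, hU.2.1, fun h => hU.2.2 (htight U hU.2.1 h)⟩
      have hle1 := Finset.card_le_card hsub1
      have hle2 := Finset.card_le_card hsub2
      have hle3 := Finset.card_le_card hsub3
      unfold strassenPot
      rcases hcase with hc | hc | ⟨hSne, hc⟩
      · have hmem1 : x₀ ∈ univ.filter (fun x => μ₁ x ≠ 0) :=
          Finset.mem_filter.2 ⟨Finset.mem_univ _, ne_of_gt hx₀⟩
        have hnot1 : x₀ ∉ univ.filter (fun x => μ₁' x ≠ 0) := by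
          rw [Finset.mem_filter]
          push_neg
          intro _
          rw [hμ₁']; simp [hc]
        have hlt1 := Finset.card_lt_card
          ((Finset.ssubset_iff_of_subset hsub1).2 ⟨x₀, hmem1, hnot1⟩)
        omega
      · have hmem2 : y ∈ univ.filter (fun x => μ₂ x ≠ 0) :=
          Finset.mem_filter.2 ⟨Finset.mem_univ _, ne_of_gt hμ₂y⟩
        have hnot2 : y ∉ univ.filter (fun x => μ₂' x ≠ 0) := by
          rw [Finset.mem_filter]
          push_neg
          intro _
          rw [hμ₂']; simp [hc]
        have hlt2 := Finset.card_lt_card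
          ((Finset.ssubset_iff_of_subset hsub2).2 ⟨y, hmem2, hnot2⟩)
        omega
      · obtain ⟨U₀, hU₀S, hδeq⟩ := Finset.exists_mem_eq_inf' hSne gap
        obtain ⟨-, hU₀up, hyU₀, hxU₀⟩ := Finset.mem_filter.1 hU₀S
        have hεgap : ε = gap U₀ := by
          rw [hc, hδ, dif_pos hSne, hδeq]
        have hmem3 : U₀ ∈ (univ : Finset (Finset P)).filter
            (fun U => StrassenIsUpset U ∧ ∑ x ∈ U, μ₁ x ≠ ∑ x ∈ U, μ₂ x) :=
          Finset.mem_filter.2 ⟨Finset.mem_univ _, hU₀up,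
            ne_of_lt (hgap U₀ hU₀up hyU₀ hxU₀)⟩
        have hnot3 : U₀ ∉ (univ : Finset (Finset P)).filter
            (fun U => StrassenIsUpset U ∧ ∑ x ∈ U, μ₁' x ≠ ∑ x ∈ U, μ₂' x) := by
          rw [Finset.mem_filter]
          push_neg
          intro _ _
          rw [sum₁', sum₂', if_neg hxU₀, if_pos hyU₀, hεgap]
          simp only [hgapdef]
          ring
        have hlt3 := Finset.card_lt_card
          ((Finset.ssubset_iff_of_subset hsub3).2 ⟨U₀, hmem3, hnot3⟩)
        omega
    obtain ⟨lam', hl0, hl1, hl2, hl3⟩ := ih (strassenPot μ₁' μ₂')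
      (lt_of_lt_of_le hpot' hpot) μ₁' μ₂' le_rfl h₁' h₂' hsum' hdom'
    refine ⟨fun p => lam' p + (if p.1 = x₀ ∧ p.2 = y then ε else 0), ?_, ?_, ?_, ?_⟩
    · intro p
      dsimp only
      have := hl0 p
      by_cases h : p.1 = x₀ ∧ p.2 = y
      · rw [if_pos h]; linarith
      · rw [if_neg h]; linarith
    · intro x
      rw [Finset.sum_add_distrib, hl1 x]
      simp only [hμ₁']
      by_cases hx : x = x₀
      · subst hx; simp
      · simp [hx]
    · intro z
      rw [Finset.sum_add_distrib, hl2 z]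
      simp only [hμ₂']
      by_cases hz : z = y
      · subst hz; simp
      · simp [hz]
    · intro a b hab
      by_cases h : a = x₀ ∧ b = y
      · rw [h.1, h.2]; exact hx₀y
      · simp only [h, if_false, add_zero] at hab
        exact hl3 a b hab
  · -- μ₁ is identically zero, hence so is μ₂
    push_neg at hex
    have hμ₁0 : ∀ x, μ₁ x = 0 := fun x => le_antisymm (hex x) (h₁ x)
    have hμ₂sum : ∑ x, μ₂ x = 0 := by
      rw [← hsum]; exact Finset.sum_eq_zero (fun i _ => hμ₁0 i)
    have hμ₂0 : ∀ x, μ₂ x = 0 := fun x =>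
      (Finset.sum_eq_zero_iff_of_nonneg (fun i _ => h₂ i)).1 hμ₂sum x (Finset.mem_univ x)
    exact ⟨fun _ => 0, fun p => le_refl _, fun x => by simp [hμ₁0 x],
      fun x => by simp [hμ₂0 x], fun a b h => absurd h (lt_irrefl 0)⟩

end StrassenAux

/-- Discrete Strassen theorem: if a probability distribution `μ₁` on a finite
poset `P` is stochastically dominated by `μ₂`, then there is a joint
distribution `λ` on `P × P` with marginals `μ₁` and `μ₂` that is supported on
pairs `(x, y)` with `x ≤ y`. -/
theorem discrete_strassen {P : Type*} [Fintype P] [PartialOrder P]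
    (μ₁ μ₂ : P → ℝ)
    (h₁ : ∀ x, 0 ≤ μ₁ x) (h₂ : ∀ x, 0 ≤ μ₂ x)
    (hs₁ : ∑ x, μ₁ x = 1) (hs₂ : ∑ x, μ₂ x = 1)
    (hdom : ∀ U : Finset P, (∀ x y, x ∈ U → x ≤ y → y ∈ U) →
      ∑ x ∈ U, μ₁ x ≤ ∑ x ∈ U, μ₂ x) :
    ∃ lam : P × P → ℝ,
      (∀ p, 0 ≤ lam p) ∧
      (∀ x, ∑ y, lam (x, y) = μ₁ x) ∧
      (∀ y, ∑ x, lam (x, y) = μ₂ y) ∧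
      (∀ x y, 0 < lam (x, y) → x ≤ y) := by
  exact strassen_aux (strassenPot μ₁ μ₂) μ₁ μ₂ le_rfl h₁ h₂ (hs₁.trans hs₂.symm)
    (fun U hU => hdom U hU)
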